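/- Let f : V → V be a nonexpansive map on a finite dimensional real normed space (V,‖·‖) whose norm is smooth, i.e., each unit vector has a unique norming functional of dual norm one. Then there exist finitely many points w₁, …, w_m ∈ V such that 0 lies in the interior of the convex hull of {f(w_i) − w_i : i = 1, …, m} if and only if Fix(f) = {x : f(x) = x} is nonempty and bounded. -/

import Mathlib

open Set Filter Topology

section Helpers

variable {V : Type*} [NormedAddCommGroup V] [NormedSpace ℝ V] [FiniteDimensional ℝ V]

/-- If `0` is in the interior of the convex hull of `S`, then it is in the interior of the
convex hull of a finite subset of `S`. -/
lemma finset_interior_convexHull {S : Set V}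
    (h : (0 : V) ∈ interior (convexHull ℝ S)) :
    ∃ T : Finset V, ↑T ⊆ S ∧ (0 : V) ∈ interior (convexHull ℝ (T : Set V)) := by
  have hspan : affineSpan ℝ S = ⊤ := by
    rw [← affineSpan_convexHull]
    exact (convex_convexHull ℝ S).interior_nonempty_iff_affineSpan_eq_top.mp ⟨0, h⟩
  -- finite affinely spanning subset
  obtain ⟨t, htS, htspan, htind⟩ := exists_affineIndependent ℝ V S
  have htfin : t.Finite := finite_set_of_fin_dim_affineIndependent ℝ htind
  have h0 : (interior (convexHull ℝ t)).Nonempty := by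
    rw [(convex_convexHull ℝ t).interior_nonempty_iff_affineSpan_eq_top,
      affineSpan_convexHull, htspan, hspan]
  obtain ⟨z, hz⟩ := h0
  -- take a ball around 0 inside the hull of S
  obtain ⟨ε, hε, hball⟩ := Metric.mem_nhds_iff.mp (mem_interior_iff_mem_nhds.mp h)
  rcases eq_or_ne z 0 with rfl | hzne
  · exact ⟨htfin.toFinset, by simpa using htS, by simpa [htfin.coe_toFinset] using hz⟩
  · -- the point y on the opposite side of z, inside the ball
    set y : V := -((ε / (2 * ‖z‖)) • z) with hy
    have hznorm : 0 < ‖z‖ := norm_pos_iff.mpr hzne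
    have hyball : y ∈ Metric.ball (0 : V) ε := by
      simp only [hy, Metric.mem_ball, dist_zero_right, norm_neg, norm_smul, Real.norm_eq_abs]
      rw [abs_of_pos (by positivity)]
      rw [div_mul_eq_mul_div, mul_comm]
      rw [div_lt_iff₀ (by positivity)]
      nlinarith
    have hyS : y ∈ convexHull ℝ S := hball hyball
    -- y is in the hull of a finite subset of S
    obtain ⟨ι, hι, w, p, hw0, hw1, hpS, hsum⟩ := mem_convexHull_iff_exists_fintype.mp hyS
    have : y ∈ convexHull ℝ (Set.range p) :=
      mem_convexHull_of_exists_fintype w p hw0 hw1 (fun i => mem_range_self i) hsum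
    set T' : Set V := t ∪ Set.range p with hT'
    have hT'fin : T'.Finite := htfin.union (finite_range p)
    refine ⟨hT'fin.toFinset, ?_, ?_⟩
    · rw [hT'fin.coe_toFinset]
      exact union_subset htS (range_subset_iff.mpr hpS)
    · rw [hT'fin.coe_toFinset]
      have hzT' : z ∈ interior (convexHull ℝ T') :=
        interior_mono (convexHull_mono subset_union_left) hz
      have hyT' : y ∈ convexHull ℝ T' :=
        convexHull_mono subset_union_right this
      -- 0 = a • z + b • y with a,b > 0
      set b : ℝ := 2 * ‖z‖ / (2 * ‖z‖ + ε) with hb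
      set a : ℝ := ε / (2 * ‖z‖ + ε) with ha
      have hab : a + b = 1 := by
        rw [ha, hb, ← add_div, add_comm]
        exact div_self (by positivity)
      have hscal : a - b * (ε / (2 * ‖z‖)) = 0 := by
        rw [ha, hb]
        field_simp
        ring
      have key : a • z + b • y = 0 := by
        rw [hy, smul_neg, smul_smul, ← sub_eq_add_neg, ← sub_smul, hscal, zero_smul]
      have := (convex_convexHull ℝ T').combo_interior_self_mem_interior hzT' hyT'
        (a := a) (b := b) (by positivity) (by positivity) hab
      rwa [key] at this

/-- If `0` is not in the interior of the convex hull of a nonempty set `D`, there is a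
nonzero functional which is nonnegative on `D`. -/
lemma exists_nonneg_functional {D : Set V} (hD : D.Nonempty)
    (h : (0 : V) ∉ interior (convexHull ℝ D)) :
    ∃ ψ : V →L[ℝ] ℝ, ψ ≠ 0 ∧ ∀ d ∈ D, 0 ≤ ψ d := by
  set C := convexHull ℝ D with hC
  by_cases hint : (interior C).Nonempty
  · obtain ⟨g, hg⟩ := geometric_hahn_banach_open_point
      (convex_convexHull ℝ D).interior isOpen_interior h
    refine ⟨-g, ?_, ?_⟩
    · obtain ⟨c, hc⟩ := hint
      intro h0
      have hg0 : g = 0 := by rw [← neg_neg g, h0, neg_zero]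
      have h1 := hg c hc
      rw [hg0] at h1
      simp at h1
    · intro d hd
      obtain ⟨c, hc⟩ := hint
      have hgc : g c < 0 := by simpa using hg c hc
      have hgd : g d ≤ 0 := by
        by_contra hpos
        push_neg at hpos
        set t : ℝ := g d / (2 * (g d - g c)) with ht
        have hden : 0 < g d - g c := by linarith
        have ht0 : 0 < t := by positivity
        have ht1 : t ≤ 1 := by
          rw [ht, div_le_one (by linarith)]
          linarith
        have hmem : t • c + (1 - t) • d ∈ interior C :=
          (convex_convexHull ℝ D).combo_interior_self_mem_interior hc
            (subset_convexHull ℝ D hd) ht0 (by linarith) (by ring)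
        have := hg _ hmem
        simp only [map_add, map_smul, smul_eq_mul, map_zero] at this
        have hcalc : t * g c + (1 - t) * g d = g d / 2 := by
          rw [ht]
          field_simp
          ring
        rw [hcalc] at this
        linarith
      simpa using neg_nonneg.mpr hgd
  · -- the hull has empty interior: D lies in a proper affine subspace
    have hspan : affineSpan ℝ D ≠ ⊤ := by
      intro htop
      exact hint ((convex_convexHull ℝ D).interior_nonempty_iff_affineSpan_eq_top.mpr
        (by rwa [affineSpan_convexHull]))
    obtain ⟨p, hp⟩ := hD
    have hdir : (affineSpan ℝ D).direction < ⊤ := by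
      rcases lt_or_eq_of_le (le_top : (affineSpan ℝ D).direction ≤ ⊤) with h' | h'
      · exact h'
      · exact absurd ((AffineSubspace.direction_eq_top_iff_of_nonempty
          ⟨p, subset_affineSpan ℝ D hp⟩).mp h') hspan
    obtain ⟨φ₀, hφ₀ne, hφ₀⟩ := Submodule.exists_dual_map_eq_bot_of_lt_top hdir inferInstance
    set φ : V →L[ℝ] ℝ := LinearMap.toContinuousLinearMap φ₀
    have hφne : φ ≠ 0 := by
      intro h0
      apply hφ₀ne
      ext v
      have : φ v = 0 := by rw [h0]; rfl
      exact this
    have hconst : ∀ d ∈ D, φ d = φ p := by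
      intro d hd
      have hmem : d - p ∈ (affineSpan ℝ D).direction := by
        simpa using AffineSubspace.vsub_mem_direction (subset_affineSpan ℝ D hd)
          (subset_affineSpan ℝ D hp)
      have : φ₀ (d - p) = 0 := by
        have := hφ₀ ▸ Submodule.mem_map_of_mem (f := φ₀) hmem
        simpa using this
      have : φ (d - p) = 0 := this
      have := φ.map_sub d p
      linarith [this ▸ ‹φ (d - p) = 0›]
    rcases le_or_gt 0 (φ p) with hc | hc
    · exact ⟨φ, hφne, fun d hd => (hconst d hd) ▸ hc⟩
    · exact ⟨-φ, by simpa using neg_ne_zero.mpr hφne,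
        fun d hd => by simpa [hconst d hd] using le_of_lt hc⟩

/-- In a finite-dimensional space, every functional attains its norm on the unit sphere. -/
lemma exists_norming_vector (ψ : V →L[ℝ] ℝ) (hψ : ψ ≠ 0) :
    ∃ u : V, ‖u‖ = 1 ∧ ψ u = ‖ψ‖ := by
  obtain ⟨u, hu, hmax⟩ := (isCompact_closedBall (0 : V) 1).exists_isMaxOn
    ⟨0, Metric.mem_closedBall_self zero_le_one⟩ (ψ.continuous.continuousOn)
  have hψ0 : (0 : ℝ) ≤ ψ u := le_trans (by simp) (hmax (Metric.mem_closedBall_self zero_le_one))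
  have hle : ∀ x : V, ‖ψ x‖ ≤ ψ u * ‖x‖ := by
    intro x
    rcases eq_or_ne x 0 with rfl | hx
    · simp
    · have hxpos : 0 < ‖x‖ := norm_pos_iff.mpr hx
      have h1 : (‖x‖⁻¹ • x) ∈ Metric.closedBall (0 : V) 1 := by
        simp [norm_smul, abs_of_pos (inv_pos.mpr hxpos), inv_mul_cancel₀ (ne_of_gt hxpos)]
      have h2 : (-(‖x‖⁻¹ • x)) ∈ Metric.closedBall (0 : V) 1 := by
        simpa [norm_smul] using h1
      have ha := hmax h1
      have hb := hmax h2
      simp only [Set.mem_setOf_eq, map_neg, map_smul, smul_eq_mul] at ha hb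
      rw [Real.norm_eq_abs, abs_le]
      have hinv : ‖x‖ * ‖x‖⁻¹ = 1 := mul_inv_cancel₀ (ne_of_gt hxpos)
      have ha' : ψ x ≤ ‖x‖ * ψ u := by
        have := mul_le_mul_of_nonneg_left ha hxpos.le
        rwa [← mul_assoc, hinv, one_mul] at this
      have hb' : -(ψ x) ≤ ‖x‖ * ψ u := by
        have := mul_le_mul_of_nonneg_left hb hxpos.le
        rwa [mul_neg, ← mul_assoc, hinv, one_mul] at this
      constructor
      · linarith [mul_comm (ψ u) ‖x‖]
      · linarith [mul_comm (ψ u) ‖x‖]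
  have hnorm_le : ‖ψ‖ ≤ ψ u := ψ.opNorm_le_bound hψ0 hle
  have hle' : ψ u ≤ ‖ψ‖ := by
    calc ψ u ≤ ‖ψ u‖ := le_abs_self _
    _ ≤ ‖ψ‖ * ‖u‖ := ψ.le_opNorm u
    _ ≤ ‖ψ‖ * 1 := by
      apply mul_le_mul_of_nonneg_left _ (norm_nonneg ψ)
      simpa [dist_zero_right] using hu
    _ = ‖ψ‖ := mul_one _
  have heq : ψ u = ‖ψ‖ := le_antisymm hle' hnorm_le
  have hψpos : 0 < ‖ψ‖ := norm_pos_iff.mpr hψ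
  have hu1 : ‖u‖ = 1 := by
    have h1 : ‖u‖ ≤ 1 := by simpa [dist_zero_right] using hu
    have h2 : (1 : ℝ) ≤ ‖u‖ := by
      by_contra hlt
      push_neg at hlt
      have : ψ u ≤ ‖ψ‖ * ‖u‖ := le_trans (le_abs_self _) (ψ.le_opNorm u)
      rw [heq] at this
      nlinarith
    linarith
  exact ⟨u, hu1, heq⟩

/-- A nonexpansive self-map of a nonempty compact convex set has a fixed point. -/
lemma nonexpansive_fixed_point_compact {f : V → V}
    (hf : ∀ x y : V, ‖f x - f y‖ ≤ ‖x - y‖) {K : Set V} (hK : IsCompact K)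
    (hconv : Convex ℝ K) (hne : K.Nonempty) (hmaps : Set.MapsTo f K K) :
    ∃ x ∈ K, f x = x := by
  obtain ⟨q, hq⟩ := hne
  have hfl : LipschitzWith 1 f := LipschitzWith.of_dist_le_mul (by
    intro x y; rw [NNReal.coe_one, one_mul, dist_eq_norm, dist_eq_norm]; exact hf x y)
  -- contraction approximations
  set lam : ℕ → ℝ := fun n => 1 - 1 / (n + 2 : ℝ) with hlam
  have hlam0 : ∀ n, 0 < lam n := by
    intro n
    have h2 : (1 : ℝ) / (n + 2) ≤ 1 / 2 := by
      apply div_le_div_of_nonneg_left one_pos.le (by norm_num)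
      push_cast; linarith [Nat.cast_nonneg (α := ℝ) n]
    simp only [hlam]; linarith
  have hlam1 : ∀ n, lam n < 1 := by
    intro n
    have : (0:ℝ) < 1 / (n + 2) := by positivity
    simp only [hlam]; linarith
  set g : ℕ → V → V := fun n x => lam n • f x + (1 - lam n) • q with hg
  have hgmaps : ∀ n, Set.MapsTo (g n) K K := fun n x hx =>
    hconv (hmaps hx) hq (le_of_lt (hlam0 n)) (by linarith [hlam1 n]) (by ring)
  have hgcontr : ∀ n, ∀ x y : V, dist (g n x) (g n y) ≤ lam n * dist x y := by
    intro n x y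
    simp only [hg, dist_eq_norm]
    have : lam n • f x + (1 - lam n) • q - (lam n • f y + (1 - lam n) • q)
        = lam n • (f x - f y) := by rw [smul_sub]; abel
    rw [this, norm_smul, Real.norm_eq_abs, abs_of_pos (hlam0 n)]
    exact mul_le_mul_of_nonneg_left (hf x y) (le_of_lt (hlam0 n))
  -- fixed points of the contractions
  have hfix : ∀ n, ∃ x ∈ K, g n x = x := by
    intro n
    have hcomplete : IsComplete K := hK.isComplete
    have hcontr : ContractingWith ⟨lam n, (hlam0 n).le⟩
        (Set.MapsTo.restrict (g n) K K (hgmaps n)) := by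
      constructor
      · exact_mod_cast hlam1 n
      · apply LipschitzWith.of_dist_le_mul
        rintro ⟨x, hx⟩ ⟨y, hy⟩
        exact hgcontr n x y
    exact ⟨_, ContractingWith.efixedPoint_mem' hcomplete (hgmaps n) hcontr hq
      (edist_ne_top q (g n q)),
      ContractingWith.efixedPoint_isFixedPt' hcomplete (hgmaps n) hcontr hq
      (edist_ne_top q (g n q))⟩
  choose x hxK hxfix using hfix
  -- a convergent subsequence
  obtain ⟨a, haK, φ, hφmono, hφlim⟩ := hK.tendsto_subseq hxK
  refine ⟨a, haK, ?_⟩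
  -- dist (f (x n)) (x n) → 0
  obtain ⟨C, hC⟩ := hK.isBounded.subset_closedBall 0
  have hdistf : ∀ n, dist (f (x n)) (x n) ≤ (1 / (n + 2 : ℝ)) * (2 * C) := by
    intro n
    have h1 : f (x n) - x n = (1 - lam n) • (f (x n) - q) := by
      nth_rewrite 2 [← hxfix n]
      simp only [hg]
      rw [smul_sub]
      module
    rw [dist_eq_norm, h1, norm_smul, Real.norm_eq_abs]
    have h2 : |1 - lam n| = 1 / (n + 2 : ℝ) := by
      have h3 : 1 - lam n = 1 / (n + 2 : ℝ) := by
        show 1 - (1 - 1 / ((n : ℝ) + 2)) = 1 / ((n : ℝ) + 2)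
        ring
      rw [h3, abs_of_pos (by positivity)]
    rw [h2]
    apply mul_le_mul_of_nonneg_left _ (by positivity)
    have hfx : ‖f (x n)‖ ≤ C := by simpa [dist_zero_right] using hC (hmaps (hxK n))
    have hqn : ‖q‖ ≤ C := by simpa [dist_zero_right] using hC hq
    calc ‖f (x n) - q‖ ≤ ‖f (x n)‖ + ‖q‖ := norm_sub_le _ _
    _ ≤ 2 * C := by linarith
  have hdist0 : Filter.Tendsto (fun n => dist (f (x n)) (x n)) Filter.atTop (nhds 0) := by
    apply squeeze_zero (fun n => dist_nonneg) hdistf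
    have hat : Filter.Tendsto (fun n : ℕ => ((n : ℝ) + 2)) Filter.atTop Filter.atTop :=
      Filter.tendsto_atTop_add_const_right _ 2 tendsto_natCast_atTop_atTop
    have := hat.inv_tendsto_atTop
    simpa [one_div, Function.comp] using this.mul_const (2 * C)
  have hxlim : Filter.Tendsto (fun k => x (φ k)) Filter.atTop (nhds a) := hφlim
  have hflim : Filter.Tendsto (fun k => f (x (φ k))) Filter.atTop (nhds (f a)) :=
    (hfl.continuous.tendsto a).comp hxlim
  have : Filter.Tendsto (fun k => dist (f (x (φ k))) (x (φ k))) Filter.atTop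
      (nhds (dist (f a) a)) := hflim.dist hxlim
  have h0 : dist (f a) a = 0 :=
    tendsto_nhds_unique this ((hdist0.comp hφmono.tendsto_atTop))
  rw [dist_eq_zero] at h0
  exact h0

/-- If a nonzero functional is nondecreasing along a nonexpansive map `f`, and `f` has a
fixed point, then `f` has fixed points arbitrarily far away. -/
lemma fixed_points_unbounded {f : V → V} (hf : ∀ x y : V, ‖f x - f y‖ ≤ ‖x - y‖)
    (ψ : V →L[ℝ] ℝ) (hψ : ψ ≠ 0) (hmono : ∀ x : V, ψ x ≤ ψ (f x))
    {p : V} (hp : f p = p) (t : ℝ) (ht : 0 < t) :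
    ∃ x : V, f x = x ∧ t ≤ ‖x - p‖ := by
  obtain ⟨u, hu1, huψ⟩ := exists_norming_vector ψ hψ
  have hψpos : 0 < ‖ψ‖ := norm_pos_iff.mpr hψ
  set K : Set V := {x : V | ‖x - p‖ ≤ t ∧ ψ (x - p) = t * ‖ψ‖} with hK
  have hKsub : K ⊆ Metric.closedBall p t := by
    intro x hx
    simpa [Metric.mem_closedBall, dist_eq_norm] using hx.1
  have hKclosed : IsClosed K := by
    apply IsClosed.inter
    · exact isClosed_le (continuous_norm.comp (continuous_id.sub continuous_const))
        continuous_const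
    · exact isClosed_eq (ψ.continuous.comp (continuous_id.sub continuous_const))
        continuous_const
  have hKcomp : IsCompact K := (isCompact_closedBall p t).of_isClosed_subset hKclosed hKsub
  have hcombo : ∀ (x y : V) (a b : ℝ), a + b = 1 →
      a • x + b • y - p = a • (x - p) + b • (y - p) := by
    intro x y a b hab
    have h1 : a • (x - p) + b • (y - p) = a • x + b • y - (a + b) • p := by
      rw [smul_sub, smul_sub, add_smul]; abel
    rw [h1, hab, one_smul]
  have hKconv : Convex ℝ K := by
    intro x hx y hy a b ha hb hab
    constructor
    · rw [hcombo x y a b hab]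
      calc ‖a • (x - p) + b • (y - p)‖ ≤ ‖a • (x - p)‖ + ‖b • (y - p)‖ := norm_add_le _ _
      _ = a * ‖x - p‖ + b * ‖y - p‖ := by
          rw [norm_smul, norm_smul, Real.norm_eq_abs, Real.norm_eq_abs, abs_of_nonneg ha,
            abs_of_nonneg hb]
      _ ≤ a * t + b * t := by
          apply add_le_add (mul_le_mul_of_nonneg_left hx.1 ha)
            (mul_le_mul_of_nonneg_left hy.1 hb)
      _ = t := by rw [← add_mul, hab, one_mul]
    · rw [hcombo x y a b hab, map_add, map_smul, map_smul, hx.2, hy.2, smul_eq_mul,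
        smul_eq_mul, ← add_mul, hab, one_mul]
  have hKne : K.Nonempty := by
    refine ⟨p + t • u, ?_, ?_⟩
    · simp [norm_smul, Real.norm_eq_abs, abs_of_pos ht, hu1]
    · simp [map_smul, huψ, smul_eq_mul]
  have hmaps : Set.MapsTo f K K := by
    intro x hx
    have hle : ‖f x - p‖ ≤ t := by
      calc ‖f x - p‖ = ‖f x - f p‖ := by rw [hp]
      _ ≤ ‖x - p‖ := hf x p
      _ ≤ t := hx.1
    refine ⟨hle, ?_⟩
    have hge : t * ‖ψ‖ ≤ ψ (f x - p) := by
      have h2 := hmono x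
      have h3 : ψ (x - p) = t * ‖ψ‖ := hx.2
      rw [map_sub] at h3 ⊢
      linarith
    have hle2 : ψ (f x - p) ≤ t * ‖ψ‖ := by
      calc ψ (f x - p) ≤ ‖ψ (f x - p)‖ := le_abs_self _
      _ ≤ ‖ψ‖ * ‖f x - p‖ := ψ.le_opNorm _
      _ ≤ ‖ψ‖ * t := mul_le_mul_of_nonneg_left hle (norm_nonneg ψ)
      _ = t * ‖ψ‖ := mul_comm _ _
    exact le_antisymm hle2 hge
  obtain ⟨x, hxK, hxfix⟩ := nonexpansive_fixed_point_compact hf hKcomp hKconv hKne hmaps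
  refine ⟨x, hxfix, ?_⟩
  have : t * ‖ψ‖ = ψ (x - p) := hxK.2.symm
  have h2 : ψ (x - p) ≤ ‖ψ‖ * ‖x - p‖ := le_trans (le_abs_self _) (ψ.le_opNorm _)
  nlinarith [hxK.1]

/-- Core lemma: under smoothness, if `0` is interior to the hull of the `d i`, then for `x`
far away it is impossible that for each `i` some norming functional of `x - w i` is
nonnegative on `d i`. -/
lemma core_radius (hsmooth : ∀ z : V, ‖z‖ = 1 → ∃! φ : V →L[ℝ] ℝ, ‖φ‖ = 1 ∧ φ z = 1)
    {m : ℕ} (w d : Fin m → V)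
    (hint : (0 : V) ∈ interior (convexHull ℝ (Set.range d))) :
    ∃ R : ℝ, ∀ x : V, R ≤ ‖x‖ →
      ¬ (∀ i, ∃ φ : V →L[ℝ] ℝ, ‖φ‖ ≤ 1 ∧ φ (x - w i) = ‖x - w i‖ ∧ 0 ≤ φ (d i)) := by
  by_contra hcon
  push_neg at hcon
  choose X hXnorm hXP using fun n : ℕ => hcon ((n : ℝ) + 1)
  choose Φ hΦle hΦeq hΦd using hXP
  have hXpos : ∀ n, 0 < ‖X n‖ := by
    intro n
    have := hXnorm n
    have h0 : (0:ℝ) ≤ (n : ℝ) := Nat.cast_nonneg n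
    linarith
  set v : ℕ → V := fun n => ‖X n‖⁻¹ • X n with hv
  have hvmem : ∀ n, v n ∈ Metric.sphere (0 : V) 1 := by
    intro n
    simp only [hv, mem_sphere_iff_norm, sub_zero, norm_smul, Real.norm_eq_abs,
      abs_of_pos (inv_pos.mpr (hXpos n))]
    exact inv_mul_cancel₀ (ne_of_gt (hXpos n))
  obtain ⟨u, humem, σ, hσ, hσlim⟩ := (isCompact_sphere (0 : V) 1).tendsto_subseq hvmem
  have hu1 : ‖u‖ = 1 := by simpa [mem_sphere_iff_norm] using humem
  -- subsequence along which all the functionals converge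
  set S : Set (Fin m → (V →L[ℝ] ℝ)) :=
    Set.pi Set.univ (fun _ => Metric.closedBall (0 : V →L[ℝ] ℝ) 1) with hS
  have hScomp : IsCompact S := isCompact_univ_pi (fun _ => isCompact_closedBall _ _)
  have hGS : ∀ k, (fun i => Φ (σ k) i) ∈ S := by
    intro k i _
    exact mem_closedBall_zero_iff.mpr (hΦle (σ k) i)
  obtain ⟨Ψ, hΨS, τ, hτ, hτlim⟩ := hScomp.tendsto_subseq hGS
  set ρ : ℕ → ℕ := σ ∘ τ with hρ
  have hρmono : StrictMono ρ := hσ.comp hτ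
  -- basic limits
  have hvu : Filter.Tendsto (fun k => v (ρ k)) Filter.atTop (nhds u) :=
    hσlim.comp hτ.tendsto_atTop
  have hΨi : ∀ i, Filter.Tendsto (fun k => Φ (ρ k) i) Filter.atTop (nhds (Ψ i)) := by
    intro i
    exact (tendsto_pi_nhds.mp hτlim) i
  have hzbig : ∀ k : ℕ, (k : ℝ) + 1 ≤ ‖X (ρ k)‖ := by
    intro k
    have h1 := hXnorm (ρ k)
    have h2 : (k : ℝ) ≤ (ρ k : ℝ) := by exact_mod_cast hρmono.le_apply
    linarith
  have hzinf : Filter.Tendsto (fun k => ‖X (ρ k)‖) Filter.atTop Filter.atTop := by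
    apply Filter.tendsto_atTop_mono hzbig
    have : Filter.Tendsto (fun k : ℕ => (k : ℝ)) Filter.atTop Filter.atTop :=
      tendsto_natCast_atTop_atTop
    exact Filter.tendsto_atTop_add_const_right _ 1 this
  have hzinv : Filter.Tendsto (fun k => ‖X (ρ k)‖⁻¹) Filter.atTop (nhds 0) :=
    hzinf.inv_tendsto_atTop
  -- evaluation limits
  have heval : ∀ (i : Fin m) (y : ℕ → V) (b : V),
      Filter.Tendsto y Filter.atTop (nhds b) →
      Filter.Tendsto (fun k => Φ (ρ k) i (y k)) Filter.atTop (nhds (Ψ i b)) := by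
    intro i y b hy
    have hc : Continuous (fun p : (V →L[ℝ] ℝ) × V => p.1 p.2) :=
      isBoundedBilinearMap_apply.continuous
    exact (hc.tendsto (Ψ i, b)).comp ((hΨi i).prodMk_nhds hy)
  -- the values Φ (ρ k) i (v (ρ k)) tend to 1
  have ha1 : ∀ i, Filter.Tendsto (fun k => Φ (ρ k) i (v (ρ k))) Filter.atTop (nhds 1) := by
    intro i
    have hstep : ∀ k, ‖Φ (ρ k) i (v (ρ k)) - 1‖ ≤ (2 * ‖w i‖) * ‖X (ρ k)‖⁻¹ := by
      intro k
      set n := ρ k with hn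
      have hpos : 0 < ‖X n‖ := hXpos n
      have hApp : Φ n i (v n) = ‖X n‖⁻¹ * Φ n i (X n) := by
        simp [hv, map_smul]
      have hXval : Φ n i (X n) = ‖X n - w i‖ + Φ n i (w i) := by
        have h := hΦeq n i
        rw [map_sub] at h
        linarith
      have hbd1 : |‖X n - w i‖ - ‖X n‖| ≤ ‖w i‖ := by
        have h := abs_norm_sub_norm_le (X n - w i) (X n)
        have h2 : X n - w i - X n = -(w i) := by abel
        rwa [h2, norm_neg] at h
      have hbd2 : |Φ n i (w i)| ≤ ‖w i‖ := by
        calc |Φ n i (w i)| ≤ ‖Φ n i‖ * ‖w i‖ := (Φ n i).le_opNorm _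
        _ ≤ 1 * ‖w i‖ := mul_le_mul_of_nonneg_right (hΦle n i) (norm_nonneg _)
        _ = ‖w i‖ := one_mul _
      have heq2 : Φ n i (v n) - 1 = ‖X n‖⁻¹ * ((‖X n - w i‖ - ‖X n‖) + Φ n i (w i)) := by
        rw [hApp, hXval]
        field_simp
        ring
      rw [Real.norm_eq_abs, heq2, abs_mul, abs_of_pos (inv_pos.mpr hpos)]
      calc ‖X n‖⁻¹ * |‖X n - w i‖ - ‖X n‖ + Φ n i (w i)|
          ≤ ‖X n‖⁻¹ * (|‖X n - w i‖ - ‖X n‖| + |Φ n i (w i)|) := by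
            apply mul_le_mul_of_nonneg_left (abs_add_le _ _) (inv_pos.mpr hpos).le
        _ ≤ ‖X n‖⁻¹ * (‖w i‖ + ‖w i‖) := by
            apply mul_le_mul_of_nonneg_left (add_le_add hbd1 hbd2) (inv_pos.mpr hpos).le
        _ = (2 * ‖w i‖) * ‖X n‖⁻¹ := by ring
    have hg0 : Filter.Tendsto (fun k => (2 * ‖w i‖) * ‖X (ρ k)‖⁻¹) Filter.atTop (nhds 0) := by
      simpa using hzinv.const_mul (2 * ‖w i‖)
    have hzero := squeeze_zero_norm hstep hg0
    have := hzero.add_const 1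
    simpa using this
  -- conclusions about the limit functionals
  have hΨu : ∀ i, Ψ i u = 1 := by
    intro i
    exact tendsto_nhds_unique (heval i _ u hvu) (ha1 i)
  have hΨle : ∀ i, ‖Ψ i‖ ≤ 1 := by
    intro i
    exact mem_closedBall_zero_iff.mp (hΨS i (Set.mem_univ i))
  have hΨnorm : ∀ i, ‖Ψ i‖ = 1 := by
    intro i
    refine le_antisymm (hΨle i) ?_
    have h1 : (1:ℝ) = Ψ i u := (hΨu i).symm
    have h2 : Ψ i u ≤ |Ψ i u| := le_abs_self _
    have h3 : |Ψ i u| ≤ ‖Ψ i‖ * ‖u‖ := (Ψ i).le_opNorm u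
    rw [hu1, mul_one] at h3
    linarith
  have hΨd : ∀ i, 0 ≤ Ψ i (d i) := by
    intro i
    exact ge_of_tendsto' (heval i (fun _ => d i) (d i) tendsto_const_nhds)
      (fun k => hΦd (ρ k) i)
  -- smoothness forces all limit functionals to coincide
  obtain ⟨φs, hφs, huniq⟩ := hsmooth u hu1
  have hall : ∀ i, Ψ i = φs := fun i => huniq (Ψ i) ⟨hΨnorm i, hΨu i⟩
  -- contradiction with 0 being interior to the hull
  have hhull : convexHull ℝ (Set.range d) ⊆ {y : V | 0 ≤ φs y} := by
    apply convexHull_min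
    · rintro y ⟨i, rfl⟩
      have := hΨd i
      rwa [hall i] at this
    · exact convex_halfSpace_ge (IsLinearMap.mk φs.map_add φs.map_smul) 0
  obtain ⟨ε, hεpos, hball⟩ := Metric.mem_nhds_iff.mp (mem_interior_iff_mem_nhds.mp hint)
  have hc : (-(ε/2) • u) ∈ Metric.ball (0 : V) ε := by
    rw [mem_ball_zero_iff, norm_smul, Real.norm_eq_abs, hu1, mul_one,
      abs_of_neg (by linarith : -(ε/2) < 0)]
    linarith
  have hmem := hhull (hball hc)
  have : φs (-(ε/2) • u) = -(ε/2) := by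
    rw [map_smul, smul_eq_mul, hφs.2, mul_one]
  rw [Set.mem_setOf_eq, this] at hmem
  linarith

/-- Boundedness of the fixed point set from the interior condition. -/
lemma fix_bounded_of_interior
    (hsmooth : ∀ z : V, ‖z‖ = 1 → ∃! φ : V →L[ℝ] ℝ, ‖φ‖ = 1 ∧ φ z = 1)
    {f : V → V} (hf : ∀ x y : V, ‖f x - f y‖ ≤ ‖x - y‖) {m : ℕ} {w : Fin m → V}
    (hint : (0 : V) ∈ interior (convexHull ℝ (Set.range (fun i => f (w i) - w i)))) :
    Bornology.IsBounded {x : V | f x = x} := by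
  obtain ⟨R, hR⟩ := core_radius hsmooth w (fun i => f (w i) - w i) hint
  apply Bornology.IsBounded.subset (Metric.isBounded_closedBall (x := (0:V)) (r := R))
  intro x hx
  rw [Set.mem_setOf_eq] at hx
  rw [Metric.mem_closedBall, dist_zero_right]
  by_contra hlt
  push_neg at hlt
  apply hR x hlt.le
  intro i
  rcases eq_or_ne x (w i) with heq | hne
  · refine ⟨0, by simp, by simp [← heq], ?_⟩
    simp
  · obtain ⟨φ, hφ1, hφ2c⟩ := exists_dual_vector ℝ (x - w i) (norm_ne_zero_iff.mpr (sub_ne_zero.mpr hne))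
    have hφ2 : φ (x - w i) = ‖x - w i‖ := by exact_mod_cast hφ2c
    refine ⟨φ, le_of_eq hφ1, hφ2, ?_⟩
    have h1 : ‖x - f (w i)‖ ≤ ‖x - w i‖ := by
      calc ‖x - f (w i)‖ = ‖f x - f (w i)‖ := by rw [hx]
      _ ≤ ‖x - w i‖ := hf x (w i)
    have h2 : φ (x - f (w i)) ≤ ‖x - w i‖ := by
      calc φ (x - f (w i)) ≤ ‖φ (x - f (w i))‖ := le_abs_self _
      _ ≤ ‖φ‖ * ‖x - f (w i)‖ := φ.le_opNorm _
      _ = ‖x - f (w i)‖ := by rw [hφ1, one_mul]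
      _ ≤ ‖x - w i‖ := h1
    have h3 : φ (x - f (w i)) = φ (x - w i) - φ (f (w i) - w i) := by
      rw [← map_sub]
      congr 1
      abel
    rw [h3, hφ2] at h2
    linarith

/-- Nonemptiness of the fixed point set from the interior condition. -/
lemma fix_nonempty_of_interior
    (hsmooth : ∀ z : V, ‖z‖ = 1 → ∃! φ : V →L[ℝ] ℝ, ‖φ‖ = 1 ∧ φ z = 1)
    {f : V → V} (hf : ∀ x y : V, ‖f x - f y‖ ≤ ‖x - y‖) {m : ℕ} {w : Fin m → V}
    (hint : (0 : V) ∈ interior (convexHull ℝ (Set.range (fun i => f (w i) - w i)))) :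
    {x : V | f x = x}.Nonempty := by
  obtain ⟨R, hR⟩ := core_radius hsmooth w (fun i => f (w i) - w i) hint
  obtain ⟨C₀, hC₀⟩ := Finite.exists_le (fun i : Fin m => ‖w i‖)
  set C : ℝ := max C₀ 0 with hCdef
  have hC : ∀ i, ‖w i‖ ≤ C := fun i => le_trans (hC₀ i) (le_max_left _ _)
  have hC0 : 0 ≤ C := le_max_right _ _
  set R' : ℝ := max R (2 * C + 1) with hR'def
  have hR'C : 2 * C + 1 ≤ R' := le_max_right _ _
  have hR'R : R ≤ R' := le_max_left _ _
  -- fixed points of the scaled maps stay in the ball of radius R'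
  have key : ∀ l : ℝ, 0 < l → l < 1 → ∀ x : V, l • f x = x → ‖x‖ < R' := by
    intro l hl0 hl1 x hx
    by_contra hbig
    push_neg at hbig
    apply hR x (le_trans hR'R hbig)
    intro i
    have hxwi : x ≠ w i := by
      intro h
      rw [h] at hbig
      have := hC i
      linarith
    obtain ⟨φ, hφ1, hφ2c⟩ := exists_dual_vector ℝ (x - w i) (norm_ne_zero_iff.mpr (sub_ne_zero.mpr hxwi))
    have hφ2 : φ (x - w i) = ‖x - w i‖ := by exact_mod_cast hφ2c
    refine ⟨φ, le_of_eq hφ1, hφ2, ?_⟩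
    -- f x = l⁻¹ • x
    have hfx : f x = l⁻¹ • x := by
      have h := congrArg (fun y => l⁻¹ • y) hx
      simp only [smul_smul, inv_mul_cancel₀ (ne_of_gt hl0), one_smul] at h
      exact h
    have h1 : ‖f x - f (w i)‖ ≤ ‖x - w i‖ := hf x (w i)
    have h2 : φ (f x - f (w i)) ≤ ‖x - w i‖ := by
      calc φ (f x - f (w i)) ≤ ‖φ (f x - f (w i))‖ := le_abs_self _
      _ ≤ ‖φ‖ * ‖f x - f (w i)‖ := φ.le_opNorm _
      _ = ‖f x - f (w i)‖ := by rw [hφ1, one_mul]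
      _ ≤ ‖x - w i‖ := h1
    have h3 : φ (f x - f (w i)) =
        l⁻¹ * φ x - φ (x - w i) - φ (f (w i) - w i) + φ (x - w i) - φ (w i) := by
      rw [hfx]
      simp only [map_sub, map_smul, smul_eq_mul]
      ring
    have hφwi : |φ (w i)| ≤ C := by
      calc |φ (w i)| ≤ ‖φ‖ * ‖w i‖ := φ.le_opNorm _
      _ = ‖w i‖ := by rw [hφ1, one_mul]
      _ ≤ C := hC i
    have hφx : 1 ≤ φ x := by
      have h4 : φ x = ‖x - w i‖ + φ (w i) := by
        rw [← hφ2, map_sub]; ring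
      have h5 : ‖x‖ - ‖w i‖ ≤ ‖x - w i‖ := norm_sub_norm_le x (w i)
      have h6 := abs_le.mp hφwi
      have h7 := hC i
      rw [h4]
      have : 2 * C + 1 ≤ ‖x‖ := le_trans hR'C hbig
      linarith
    have hlinv : 1 < l⁻¹ := (one_lt_inv₀ hl0).mpr hl1
    rw [h3, hφ2] at h2
    have h4 : ‖x - w i‖ = φ x - φ (w i) := by rw [← hφ2, map_sub]
    nlinarith [h2, hφx, hlinv, h4,
      mul_nonneg (sub_nonneg.mpr hlinv.le) (by linarith : (0:ℝ) ≤ φ x - 1)]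
  -- contraction fixed points
  set lam : ℕ → ℝ := fun n => 1 - 1 / (n + 2 : ℝ) with hlam
  have hlam0 : ∀ n, 0 < lam n := by
    intro n
    have h2 : (1 : ℝ) / (n + 2) ≤ 1 / 2 := by
      apply div_le_div_of_nonneg_left one_pos.le (by norm_num)
      have := Nat.cast_nonneg (α := ℝ) n; linarith
    simp only [hlam]; linarith
  have hlam1 : ∀ n, lam n < 1 := by
    intro n
    have : (0:ℝ) < 1 / (n + 2) := by positivity
    simp only [hlam]; linarith
  have hcontr : ∀ n : ℕ, ContractingWith ⟨lam n, (hlam0 n).le⟩ (fun x : V => lam n • f x) := by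
    intro n
    constructor
    · exact_mod_cast hlam1 n
    · apply LipschitzWith.of_dist_le_mul
      intro x y
      simp only [dist_eq_norm, ← smul_sub, norm_smul, Real.norm_eq_abs,
        abs_of_pos (hlam0 n), NNReal.coe_mk]
      exact mul_le_mul_of_nonneg_left (hf x y) (hlam0 n).le
  set x : ℕ → V := fun n => ContractingWith.fixedPoint _ (hcontr n) with hxdef
  have hxfix : ∀ n, lam n • f (x n) = x n := fun n => (hcontr n).fixedPoint_isFixedPt
  have hxball : ∀ n, x n ∈ Metric.closedBall (0 : V) R' := by
    intro n
    rw [Metric.mem_closedBall, dist_zero_right]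
    exact (key (lam n) (hlam0 n) (hlam1 n) (x n) (hxfix n)).le
  obtain ⟨a, haball, σ, hσ, hσlim⟩ := (isCompact_closedBall (0:V) R').tendsto_subseq hxball
  refine ⟨a, ?_⟩
  rw [Set.mem_setOf_eq]
  have hfl : LipschitzWith 1 f := LipschitzWith.of_dist_le_mul (by
    intro x y; rw [NNReal.coe_one, one_mul, dist_eq_norm, dist_eq_norm]; exact hf x y)
  have hlamlim : Filter.Tendsto (fun k => lam (σ k)) Filter.atTop (nhds 1) := by
    have hat : Filter.Tendsto (fun n : ℕ => ((n : ℝ) + 2)) Filter.atTop Filter.atTop :=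
      Filter.tendsto_atTop_add_const_right _ 2 tendsto_natCast_atTop_atTop
    have h0 : Filter.Tendsto (fun n : ℕ => 1 / ((n : ℝ) + 2)) Filter.atTop (nhds 0) := by
      simpa [one_div, Pi.inv_def] using hat.inv_tendsto_atTop
    have h1 : Filter.Tendsto (fun n : ℕ => lam n) Filter.atTop (nhds 1) := by
      have := (tendsto_const_nhds (x := (1:ℝ)) (f := Filter.atTop (α := ℕ))).sub h0
      simpa [hlam] using this
    exact h1.comp hσ.tendsto_atTop
  have hxa : Filter.Tendsto (fun k => x (σ k)) Filter.atTop (nhds a) := hσlim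
  have hfa : Filter.Tendsto (fun k => f (x (σ k))) Filter.atTop (nhds (f a)) :=
    (hfl.continuous.tendsto a).comp hxa
  have hcomb : Filter.Tendsto (fun k => lam (σ k) • f (x (σ k))) Filter.atTop
      (nhds ((1:ℝ) • f a)) := hlamlim.smul hfa
  have : Filter.Tendsto (fun k => x (σ k)) Filter.atTop (nhds ((1:ℝ) • f a)) := by
    have he : (fun k => lam (σ k) • f (x (σ k))) = fun k => x (σ k) := by
      funext k; exact hxfix (σ k)
    rwa [he] at hcomb
  have := tendsto_nhds_unique this hxa
  rw [one_smul] at this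
  exact this

end Helpers

/-- For a nonexpansive map `f` on a finite dimensional real normed space with a smooth
norm, there are finitely many points `wᵢ` with `0` in the interior of the convex hull of
`{f(wᵢ) - wᵢ}` iff the fixed point set of `f` is nonempty and bounded. -/
theorem stmt12 {V : Type*} [NormedAddCommGroup V] [NormedSpace ℝ V] [FiniteDimensional ℝ V]
    (hsmooth : ∀ z : V, ‖z‖ = 1 → ∃! φ : V →L[ℝ] ℝ, ‖φ‖ = 1 ∧ φ z = 1)
    (f : V → V) (hf : ∀ x y : V, ‖f x - f y‖ ≤ ‖x - y‖) :
    (∃ (m : ℕ) (w : Fin m → V),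
      (0 : V) ∈ interior (convexHull ℝ (Set.range (fun i => f (w i) - w i)))) ↔
      ({x : V | f x = x}.Nonempty ∧ Bornology.IsBounded {x : V | f x = x}) := by
  constructor
  · rintro ⟨m, w, hint⟩
    exact ⟨fix_nonempty_of_interior hsmooth hf hint, fix_bounded_of_interior hsmooth hf hint⟩
  · rintro ⟨⟨p, hp⟩, hbdd⟩
    rw [Set.mem_setOf_eq] at hp
    by_contra hA
    push_neg at hA
    -- 0 is not interior to the hull of the full displacement set
    have hD : (0 : V) ∉ interior (convexHull ℝ (Set.range (fun x => f x - x))) := by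
      intro h0
      obtain ⟨T, hTsub, hTint⟩ := finset_interior_convexHull h0
      have hex : ∀ y ∈ T, ∃ x : V, f x - x = y := by
        intro y hy
        obtain ⟨x, hx⟩ := hTsub hy
        exact ⟨x, hx⟩
      choose g hg using hex
      set e := T.equivFin with he
      set w : Fin T.card → V := fun i => g ((e.symm i) : { y // y ∈ T }) (e.symm i).2 with hw
      apply hA T.card w
      have hrange : Set.range (fun i => f (w i) - w i) = (T : Set V) := by
        ext y
        constructor
        · rintro ⟨i, rfl⟩
          rw [hw]
          simp only []
          rw [hg]
          exact (e.symm i).2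
        · intro hy
          refine ⟨e ⟨y, hy⟩, ?_⟩
          rw [hw]
          simp only [Equiv.symm_apply_apply]
          rw [hg]
      rwa [hrange]
    have hDne : (Set.range (fun x : V => f x - x)).Nonempty := ⟨f 0 - 0, ⟨0, rfl⟩⟩
    obtain ⟨ψ, hψne, hψpos⟩ := exists_nonneg_functional hDne hD
    have hmono : ∀ x : V, ψ x ≤ ψ (f x) := by
      intro x
      have := hψpos _ (Set.mem_range_self x)
      rw [map_sub] at this
      linarith
    obtain ⟨M, hM⟩ := hbdd.subset_closedBall 0
    have hM0 : 0 ≤ M := by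
      have := hM hp
      rw [Metric.mem_closedBall] at this
      exact le_trans dist_nonneg this
    obtain ⟨x, hxfix, hxfar⟩ := fixed_points_unbounded hf ψ hψne hmono hp (M + ‖p‖ + 1)
      (by positivity)
    have hxM : ‖x‖ ≤ M := by
      have := hM (Set.mem_setOf_eq ▸ hxfix : x ∈ {x : V | f x = x})
      rwa [Metric.mem_closedBall, dist_zero_right] at this
    have : ‖x - p‖ ≤ M + ‖p‖ := by
      calc ‖x - p‖ ≤ ‖x‖ + ‖p‖ := norm_sub_le _ _
      _ ≤ M + ‖p‖ := by linarith
    linarith
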